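/- Let A₁,…,A_n be incompatible observables with m₁,…,m_n outcomes on a finite-dimensional Hilbert space. Then there exists a subset of states S₀ with affine dimension at most Σ_j m_j − n on which A₁,…,A_n are S₀-incompatible; i.e., the incompatibility dimension satisfies χ_incomp(A₁,…,A_n) ≤ Σ_{j=1}^n m_j − n + 1. -/

import Mathlib

open Matrix ComplexOrder

noncomputable section

def IsPOVM {ι : Type*} [Fintype ι] {n : Type*} [Fintype n] [DecidableEq n]
    (G : ι → Matrix n n ℂ) : Prop :=
  (∀ i, (G i).PosSemidef) ∧ ∑ i, G i = 1

def IsState {n : Type*} [Fintype n] [DecidableEq n] (ρ : Matrix n n ℂ) : Prop :=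
  ρ.PosSemidef ∧ ρ.trace = 1

/-- `S₀`-compatibility of an `n`-tuple of observables: a joint POVM whose marginal
outcome probabilities agree with those of the tuple on every state in `S₀`. -/
def SCompat {d n : ℕ} {m : Fin n → ℕ}
    (A : (j : Fin n) → Fin (m j) → Matrix (Fin d) (Fin d) ℂ)
    (S₀ : Set (Matrix (Fin d) (Fin d) ℂ)) : Prop :=
  ∃ G : ((j : Fin n) → Fin (m j)) → Matrix (Fin d) (Fin d) ℂ, IsPOVM G ∧
    ∀ ρ ∈ S₀, ∀ (j : Fin n) (x : Fin (m j)),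
      ∑ g ∈ Finset.univ.filter (fun g : (j : Fin n) → Fin (m j) => g j = x),
        (ρ * G g).trace = (ρ * A j x).trace

/-- The incompatibility dimension: minimal `dim aff S₀ + 1` over subsets of states on
which the tuple is `S₀`-incompatible. -/
def chiIncomp {d n : ℕ} {m : Fin n → ℕ}
    (A : (j : Fin n) → Fin (m j) → Matrix (Fin d) (Fin d) ℂ) : ℕ :=
  sInf {k : ℕ | ∃ S₀ : Set (Matrix (Fin d) (Fin d) ℂ),
    (∀ ρ ∈ S₀, IsState ρ) ∧ ¬ SCompat A S₀ ∧
    k = Module.finrank ℝ (vectorSpan ℝ S₀) + 1}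


lemma std_decomp {d : ℕ} (a b : Fin d) (z : ℂ) :
    Matrix.single a b z
      = z.re • Matrix.single a b (1:ℂ) + z.im • (Complex.I • Matrix.single a b (1:ℂ)) := by
  ext p q
  by_cases h : p = a ∧ q = b
  · obtain ⟨rfl, rfl⟩ := h
    simp only [Matrix.single, Matrix.of_apply, Matrix.add_apply, Matrix.smul_apply,
      smul_eq_mul, Complex.real_smul, and_self, if_true, mul_one]
    exact (Complex.re_add_im z).symm
  · simp only [Matrix.single, Matrix.of_apply, Matrix.add_apply, Matrix.smul_apply,
      smul_eq_mul, Complex.real_smul]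
    split
    · exact absurd (by tauto) h
    · simp

lemma exists_repr {d : ℕ} (ψ : Matrix (Fin d) (Fin d) ℂ →ₗ[ℝ] ℝ) :
    ∃ H : Matrix (Fin d) (Fin d) ℂ, ∀ M : Matrix (Fin d) (Fin d) ℂ,
      ψ M = ((H * M).trace).re := by
  refine ⟨Matrix.of fun b a => (↑(ψ (Matrix.single a b 1)) : ℂ)
      - Complex.I * ↑(ψ (Complex.I • Matrix.single a b 1)), fun M => ?_⟩
  set H := Matrix.of fun b a => (↑(ψ (Matrix.single a b 1)) : ℂ)
      - Complex.I * ↑(ψ (Complex.I • Matrix.single a b 1)) with hH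
  have hent : ∀ a b, H b a = (↑(ψ (Matrix.single a b 1)) : ℂ)
      - Complex.I * ↑(ψ (Complex.I • Matrix.single a b 1)) := fun a b => rfl
  have lhs : ψ M = ∑ a : Fin d, ∑ b : Fin d,
      ((M a b).re * ψ (Matrix.single a b 1)
        + (M a b).im * ψ (Complex.I • Matrix.single a b 1)) := by
    conv_lhs => rw [matrix_eq_sum_single M]
    rw [map_sum]
    refine Finset.sum_congr rfl fun a _ => ?_
    rw [map_sum]
    refine Finset.sum_congr rfl fun b _ => ?_
    rw [std_decomp, map_add, _root_.map_smul, _root_.map_smul]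
    simp [smul_eq_mul]
  have rhs : ((H * M).trace).re = ∑ b : Fin d, ∑ a : Fin d,
      ((M a b).re * ψ (Matrix.single a b 1)
        + (M a b).im * ψ (Complex.I • Matrix.single a b 1)) := by
    rw [Matrix.trace]
    rw [Complex.re_sum]
    refine Finset.sum_congr rfl fun b _ => ?_
    rw [Matrix.diag_apply, Matrix.mul_apply, Complex.re_sum]
    refine Finset.sum_congr rfl fun a _ => ?_
    rw [hent, Complex.mul_re]
    simp
    ring
  rw [lhs, rhs, Finset.sum_comm]


lemma re_trace_conjTranspose_mul {d : ℕ} (H M : Matrix (Fin d) (Fin d) ℂ)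
    (hM : M.IsHermitian) : ((Hᴴ * M).trace).re = ((H * M).trace).re := by
  have h1 : Hᴴ * M = (Mᴴ * H)ᴴ := by
    rw [Matrix.conjTranspose_mul, Matrix.conjTranspose_conjTranspose]
  rw [h1, Matrix.trace_conjTranspose, hM.eq, Matrix.trace_mul_comm]
  simp [Complex.star_def]

lemma exists_herm_repr {d : ℕ} (ψ : Matrix (Fin d) (Fin d) ℂ →ₗ[ℝ] ℝ) :
    ∃ H : Matrix (Fin d) (Fin d) ℂ, H.IsHermitian ∧ ∀ M : Matrix (Fin d) (Fin d) ℂ,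
      M.IsHermitian → ψ M = ((H * M).trace).re := by
  obtain ⟨H₀, h₀⟩ := exists_repr ψ
  have herm : ((1/2 : ℝ) • (H₀ + H₀ᴴ)).IsHermitian := by
    unfold Matrix.IsHermitian
    ext p q
    simp [Matrix.conjTranspose_apply, Matrix.add_apply, Matrix.smul_apply, Complex.real_smul,
      mul_add, add_comm]
  refine ⟨(1/2 : ℝ) • (H₀ + H₀ᴴ), herm, fun M hM => ?_⟩
  rw [Matrix.smul_mul, Matrix.add_mul, Matrix.trace_smul, Matrix.trace_add]
  have : ∀ (r : ℝ) (z : ℂ), (r • z).re = r * z.re := fun r z => by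
    simp [Complex.real_smul]
  rw [this, Complex.add_re, re_trace_conjTranspose_mul _ _ hM, h₀ M]
  ring

lemma dot_herm_real {d : ℕ} {B : Matrix (Fin d) (Fin d) ℂ} (hB : B.IsHermitian)
    (x : Fin d → ℂ) : (star x ⬝ᵥ B *ᵥ x).im = 0 := by
  have h : star (star x ⬝ᵥ B *ᵥ x) = star x ⬝ᵥ B *ᵥ x := by
    calc star (star x ⬝ᵥ B *ᵥ x) = star (B *ᵥ x) ⬝ᵥ star (star x) := by
          rw [Matrix.star_dotProduct_star]
      _ = (star x ᵥ* Bᴴ) ⬝ᵥ x := by rw [Matrix.star_mulVec, star_star]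
      _ = star x ⬝ᵥ Bᴴ *ᵥ x := by rw [Matrix.dotProduct_mulVec]
      _ = star x ⬝ᵥ B *ᵥ x := by rw [hB.eq]
  exact Complex.conj_eq_iff_im.mp h



lemma herm_trace_im {d : ℕ} {B : Matrix (Fin d) (Fin d) ℂ} (hB : B.IsHermitian) :
    B.trace.im = 0 := by
  have h : star B.trace = B.trace := by
    rw [← Matrix.trace_conjTranspose, hB.eq]
  exact Complex.conj_eq_iff_im.mp h

lemma norm_sq_le_sum {d : ℕ} (x : Fin d → ℂ) (i : Fin d) :
    ‖x i‖ ^ 2 ≤ ∑ j, Complex.normSq (x j) := by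
  have h : ‖x i‖ ^ 2 = Complex.normSq (x i) := by
    rw [← Complex.sq_norm]
  rw [h]
  exact Finset.single_le_sum (fun j _ => Complex.normSq_nonneg (x j)) (Finset.mem_univ i)

lemma shift_psd {d : ℕ} {B : Matrix (Fin d) (Fin d) ℂ} (hB : B.IsHermitian) {t : ℝ}
    (ht : ∑ a, ∑ b, ‖B a b‖ ≤ t) :
    (B + (t : ℂ) • (1 : Matrix (Fin d) (Fin d) ℂ)).PosSemidef := by
  have hSb : (0:ℝ) ≤ ∑ a, ∑ b, ‖B a b‖ :=
    Finset.sum_nonneg fun a _ => Finset.sum_nonneg fun b _ => norm_nonneg _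
  refine Matrix.PosSemidef.of_dotProduct_mulVec_nonneg ?_ ?_
  · unfold Matrix.IsHermitian
    rw [Matrix.conjTranspose_add, Matrix.conjTranspose_smul, Matrix.conjTranspose_one, hB.eq]
    norm_num
  · intro x
    set S := ∑ i, Complex.normSq (x i) with hS
    have hS0 : 0 ≤ S := Finset.sum_nonneg fun i _ => Complex.normSq_nonneg _
    have h1 : star x ⬝ᵥ (B + (t:ℂ) • 1) *ᵥ x = star x ⬝ᵥ B *ᵥ x + (t:ℂ) * (star x ⬝ᵥ x) := by
      rw [Matrix.add_mulVec, dotProduct_add, Matrix.smul_mulVec,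
        Matrix.one_mulVec, dotProduct_smul, smul_eq_mul]
    have hxx : star x ⬝ᵥ x = (S : ℂ) := by
      rw [hS]
      push_cast
      refine Finset.sum_congr rfl fun i _ => ?_
      simp [Complex.star_def, Complex.normSq_eq_conj_mul_self]
    set q := star x ⬝ᵥ B *ᵥ x with hq
    have hqe : q = ∑ a, star (x a) * ∑ b, B a b * x b := rfl
    have habs : ‖q‖ ≤ (∑ a, ∑ b, ‖B a b‖) * S := by
      rw [hqe]
      calc ‖∑ a, star (x a) * ∑ b, B a b * x b‖ ≤ ∑ a, ‖star (x a) * ∑ b, B a b * x b‖ :=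
            norm_sum_le _ _
        _ ≤ ∑ a, ∑ b, ‖B a b‖ * S := by
            refine Finset.sum_le_sum fun a _ => ?_
            rw [norm_mul, norm_star]
            calc ‖x a‖ * ‖∑ b, B a b * x b‖ ≤ ‖x a‖ * ∑ b, ‖B a b * x b‖ :=
                  mul_le_mul_of_nonneg_left (norm_sum_le _ _) (norm_nonneg _)
              _ = ∑ b, ‖B a b‖ * (‖x a‖ * ‖x b‖) := by
                  rw [Finset.mul_sum]
                  refine Finset.sum_congr rfl fun b _ => ?_
                  rw [norm_mul]; ring
              _ ≤ ∑ b, ‖B a b‖ * S := by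
                  refine Finset.sum_le_sum fun b _ => ?_
                  refine mul_le_mul_of_nonneg_left ?_ (norm_nonneg _)
                  have h1 := norm_sq_le_sum x a
                  have h2 := norm_sq_le_sum x b
                  nlinarith [norm_nonneg (x a), norm_nonneg (x b)]
        _ = (∑ a, ∑ b, ‖B a b‖) * S := by simp [Finset.sum_mul]
    have hqim : q.im = 0 := dot_herm_real hB x
    rw [h1, hxx]
    rw [Complex.le_def]
    constructor
    · simp only [Complex.zero_re, Complex.add_re, Complex.mul_re, Complex.ofReal_re,
        Complex.ofReal_im, mul_zero, sub_zero, zero_mul]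
      have := (Complex.abs_re_le_norm q)
      have h2 : |q.re| ≤ (∑ a, ∑ b, ‖B a b‖) * S := le_trans this habs
      rw [abs_le] at h2
      nlinarith [h2.1]
    · simp [hqim, Complex.ofReal_im]

lemma star_pi_single {d : ℕ} (i : Fin d) (z : ℂ) :
    star (Pi.single i z : Fin d → ℂ) = Pi.single i (star z) := by
  ext j
  rcases eq_or_ne j i with rfl | h
  · simp
  · simp [Pi.single_apply, h]

lemma diag_entry_nonneg {d : ℕ} {M : Matrix (Fin d) (Fin d) ℂ} (hM : M.PosSemidef)
    (a : Fin d) : 0 ≤ M a a := by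
  have h := hM.dotProduct_mulVec_nonneg (Pi.single a 1)
  rwa [star_pi_single, star_one, Matrix.mulVec_single, single_dotProduct,
    one_mul, MulOpposite.op_one, one_smul] at h

lemma entry_bound {d : ℕ} {M : Matrix (Fin d) (Fin d) ℂ} (hM : M.PosSemidef)
    (hdiag : ∀ a, (M a a).re ≤ 1) : ∀ a b, ‖M a b‖ ≤ 2 := by
  have hd0 : ∀ a, 0 ≤ (M a a).re ∧ (M a a).im = 0 := by
    intro a
    have h := diag_entry_nonneg hM a
    rw [Complex.le_def] at h
    exact ⟨h.1, h.2.symm⟩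
  intro a b
  rcases eq_or_ne a b with rfl | hab
  · calc ‖M a a‖ ≤ |(M a a).re| + |(M a a).im| := Complex.norm_le_abs_re_add_abs_im _
      _ ≤ 2 := by
        rw [(hd0 a).2, abs_zero, abs_of_nonneg (hd0 a).1]
        linarith [hdiag a]
  · have key : ∀ c : ℂ, star c * c = 1 →
        0 ≤ (M a a).re + (M b b).re + 2 * (c * M a b).re := by
      intro c hc
      have hdot := hM.dotProduct_mulVec_nonneg ((Pi.single a 1 : Fin d → ℂ) + c • (Pi.single b 1 : Fin d → ℂ))
      have hexp : star ((Pi.single a 1 : Fin d → ℂ) + c • (Pi.single b 1 : Fin d → ℂ)) ⬝ᵥ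
            M *ᵥ ((Pi.single a 1 : Fin d → ℂ) + c • (Pi.single b 1 : Fin d → ℂ))
          = M a a + c * M a b + (star c * M b a + star c * c * M b b) := by
        rw [star_add, star_smul, star_pi_single, star_one, Matrix.mulVec_add,
          Matrix.mulVec_smul, Matrix.mulVec_single, add_dotProduct,
          smul_dotProduct, dotProduct_add, dotProduct_add,
          Matrix.mulVec_single]
        simp only [single_dotProduct, dotProduct_smul, smul_eq_mul,
          Pi.smul_apply, mul_one, one_mul]
        simp [Pi.single_apply, mul_add, Finset.mul_sum, dotProduct]
        ring
      rw [hexp] at hdot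
      rw [Complex.le_def] at hdot
      have hba : M b a = star (M a b) := by
        conv_lhs => rw [← hM.1.eq]
        simp [Matrix.conjTranspose_apply]
      have hre := hdot.1
      rw [hba, hc, one_mul] at hre
      simp only [Complex.zero_re, Complex.add_re] at hre
      have hstar : (star c * star (M a b)).re = (c * M a b).re := by
        rw [← star_mul']
        simp [Complex.star_def]
      rw [hstar] at hre
      linarith [hre]
    have h1 := key 1 (by simp)
    have h2 := key (-1) (by simp)
    have h3 := key Complex.I (by simp)
    have h4 := key (-Complex.I) (by simp)
    have hs : (M a a).re + (M b b).re ≤ 2 := by linarith [hdiag a, hdiag b]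
    simp only [one_mul, neg_one_mul, Complex.neg_re, Complex.I_mul_re, neg_mul, neg_neg] at h1 h2 h3 h4
    calc ‖M a b‖ ≤ |(M a b).re| + |(M a b).im| := Complex.norm_le_abs_re_add_abs_im _
      _ ≤ 2 := by
        have hr : |(M a b).re| ≤ 1 := by rw [abs_le]; constructor <;> linarith
        have hi : |(M a b).im| ≤ 1 := by rw [abs_le]; constructor <;> linarith
        linarith

abbrev JT (n : ℕ) (m : Fin n → ℕ) := (j : Fin n) → Fin (m j)
abbrev TT (n : ℕ) (m : Fin n → ℕ) := (j : Fin n) × Fin (m j)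
abbrev FS (d n : ℕ) (m : Fin n → ℕ) := JT n m → Fin d → Fin d → ℂ
abbrev ES (d n : ℕ) (m : Fin n → ℕ) := TT n m → Fin d → Fin d → ℂ

section SepAux
variable {d n : ℕ} {m : Fin n → ℕ}


def GSet (d n : ℕ) (m : Fin n → ℕ) : Set (FS d n m) :=
  {G | IsPOVM (fun g => Matrix.of (G g))}

lemma gset_characterization (G : FS d n m) :
    G ∈ GSet d n m ↔
      ((∀ g a b, star (G g b a) = G g a b) ∧
       (∀ (g : JT n m) (x : Fin d → ℂ), 0 ≤ ∑ a, star (x a) * ∑ b, G g a b * x b)) ∧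
      (∀ a b, ∑ g : JT n m, G g a b = (1 : Matrix (Fin d) (Fin d) ℂ) a b) := by
  constructor
  · rintro ⟨hpsd, hsum⟩
    refine ⟨⟨fun g a b => ?_, fun g x => ?_⟩, fun a b => ?_⟩
    · have := (hpsd g).1
      exact congrFun (congrFun this a) b
    · exact (hpsd g).dotProduct_mulVec_nonneg x
    · have := congrFun (congrFun hsum a) b
      rw [Matrix.sum_apply] at this
      exact this
  · rintro ⟨⟨hherm, hdot⟩, hsum⟩
    refine ⟨fun g => Matrix.PosSemidef.of_dotProduct_mulVec_nonneg ?_ (fun x => hdot g x), ?_⟩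
    · funext a b
      exact hherm g a b
    · ext a b
      rw [Matrix.sum_apply]
      exact hsum a b


lemma isClosed_nonneg_complex : IsClosed {z : ℂ | 0 ≤ z} := by
  have h : {z : ℂ | 0 ≤ z} = {z : ℂ | 0 ≤ z.re} ∩ {z : ℂ | (0:ℝ) = z.im} := by
    ext z
    simp only [Set.mem_setOf_eq, Set.mem_inter_iff, Complex.le_def, Complex.zero_re,
      Complex.zero_im]
  rw [h]
  exact (isClosed_le continuous_const Complex.continuous_re).inter
    (isClosed_eq continuous_const Complex.continuous_im)

lemma gset_isClosed : IsClosed (GSet d n m) := by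
  have h : GSet d n m =
      ((⋂ (g : JT n m), ⋂ (a : Fin d), ⋂ (b : Fin d),
        {G : FS d n m | star (G g b a) = G g a b}) ∩
       (⋂ (g : JT n m), ⋂ (x : Fin d → ℂ),
        {G : FS d n m | 0 ≤ ∑ a, star (x a) * ∑ b, G g a b * x b})) ∩
      (⋂ (a : Fin d), ⋂ (b : Fin d),
        {G : FS d n m | ∑ g : JT n m, G g a b = (1 : Matrix (Fin d) (Fin d) ℂ) a b}) := by
    ext G
    simp only [gset_characterization, Set.mem_inter_iff, Set.mem_iInter, Set.mem_setOf_eq]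
  rw [h]
  have ev : ∀ (g : JT n m) (a b : Fin d), Continuous (fun G : FS d n m => G g a b) :=
    fun g a b => ((continuous_apply b).comp ((continuous_apply a).comp (continuous_apply g)))
  refine IsClosed.inter (IsClosed.inter ?_ ?_) ?_
  · refine isClosed_iInter fun g => isClosed_iInter fun a => isClosed_iInter fun b => ?_
    exact isClosed_eq (continuous_star.comp (ev g b a)) (ev g a b)
  · refine isClosed_iInter fun g => isClosed_iInter fun x => ?_
    have hc : Continuous (fun G : FS d n m => ∑ a, star (x a) * ∑ b, G g a b * x b) := by
      refine continuous_finset_sum _ fun a _ => Continuous.mul continuous_const ?_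
      exact continuous_finset_sum _ fun b _ => ((ev g a b).mul continuous_const)
    exact IsClosed.preimage hc isClosed_nonneg_complex
  · refine isClosed_iInter fun a => isClosed_iInter fun b => ?_
    exact isClosed_eq (continuous_finset_sum _ fun g _ => ev g a b) continuous_const

lemma gset_isBounded : Bornology.IsBounded (GSet d n m) := by
  rw [Metric.isBounded_iff_subset_closedBall 0]
  refine ⟨2, fun G hG => ?_⟩
  rw [Metric.mem_closedBall, dist_zero_right]
  have h2 : (0:ℝ) ≤ 2 := by norm_num
  rw [pi_norm_le_iff_of_nonneg h2]
  intro g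
  rw [pi_norm_le_iff_of_nonneg h2]
  intro a
  rw [pi_norm_le_iff_of_nonneg h2]
  intro b
  obtain ⟨hpsd, hsum⟩ := hG
  refine entry_bound (hpsd g) (fun c => ?_) a b
  have hd : ∀ h : JT n m, 0 ≤ Matrix.of (G h) c c := fun h => diag_entry_nonneg (hpsd h) c
  have hs : ∑ h : JT n m, Matrix.of (G h) c c = 1 := by
    have := congrFun (congrFun hsum c) c
    rw [Matrix.sum_apply] at this
    rw [this, Matrix.one_apply_eq]
  have hle : Matrix.of (G g) c c ≤ 1 := by
    rw [← hs]
    exact Finset.single_le_sum (fun h _ => hd h) (Finset.mem_univ g)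
  rw [Complex.le_def] at hle
  exact hle.1

lemma psd_smul_real {d : ℕ} {M : Matrix (Fin d) (Fin d) ℂ} (hM : M.PosSemidef) {c : ℝ}
    (hc : 0 ≤ c) : (c • M).PosSemidef := by
  refine Matrix.PosSemidef.of_dotProduct_mulVec_nonneg ?_ ?_
  · unfold Matrix.IsHermitian
    ext a b
    simp only [Matrix.conjTranspose_apply, Matrix.smul_apply, star_smul, star_trivial]
    rw [← Matrix.conjTranspose_apply, hM.1.eq]
  · intro x
    have h : star x ⬝ᵥ (c • M) *ᵥ x = (c : ℂ) * (star x ⬝ᵥ M *ᵥ x) := by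
      rw [Matrix.smul_mulVec, dotProduct_smul]
      rw [Complex.real_smul]
    rw [h]
    exact mul_nonneg (by exact_mod_cast hc) (hM.dotProduct_mulVec_nonneg x)

lemma gset_convex : Convex ℝ (GSet d n m) := by
  rintro G1 hG1 G2 hG2 a b ha hb hab
  obtain ⟨hp1, hs1⟩ := hG1
  obtain ⟨hp2, hs2⟩ := hG2
  constructor
  · intro g
    show (a • Matrix.of (G1 g) + b • Matrix.of (G2 g)).PosSemidef
    exact (psd_smul_real (hp1 g) ha).add (psd_smul_real (hp2 g) hb)
  · show ∑ g : JT n m, (a • Matrix.of (G1 g) + b • Matrix.of (G2 g)) = 1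
    rw [Finset.sum_add_distrib, ← Finset.smul_sum, ← Finset.smul_sum]
    rw [show ∑ g : JT n m, Matrix.of (G1 g) = 1 from hs1,
      show ∑ g : JT n m, Matrix.of (G2 g) = 1 from hs2, ← add_smul, hab, one_smul]

end SepAux


def marg {d n : ℕ} {m : Fin n → ℕ}
    (G : ((j : Fin n) → Fin (m j)) → Matrix (Fin d) (Fin d) ℂ)
    (j : Fin n) (x : Fin (m j)) : Matrix (Fin d) (Fin d) ℂ :=
  ∑ g ∈ Finset.univ.filter (fun g : (j : Fin n) → Fin (m j) => g j = x), G g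

section Sep

variable {d n : ℕ} {m : Fin n → ℕ}


/-- The entrywise marginal-deviation map, as a function on the plain pi type. -/
def LmapFun (A : (j : Fin n) → Fin (m j) → Matrix (Fin d) (Fin d) ℂ)
    (G : FS d n m) : ES d n m :=
  fun s a b => (∑ g ∈ Finset.univ.filter (fun g : JT n m => g s.1 = s.2), G g a b)
    - A s.1 s.2 a b

lemma LmapFun_eq (A : (j : Fin n) → Fin (m j) → Matrix (Fin d) (Fin d) ℂ)
    (G : JT n m → Matrix (Fin d) (Fin d) ℂ) :
    LmapFun A (fun g a b => G g a b) = fun s a b => (marg G s.1 s.2 - A s.1 s.2) a b := by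
  funext s a b
  simp [LmapFun, marg, Matrix.sum_apply, Matrix.sub_apply]

lemma lmapfun_affine (A : (j : Fin n) → Fin (m j) → Matrix (Fin d) (Fin d) ℂ)
    (G1 G2 : FS d n m) {a b : ℝ} (hab : a + b = 1) :
    LmapFun A (a • G1 + b • G2) = a • LmapFun A G1 + b • LmapFun A G2 := by
  funext s p q
  have hab' : (a : ℂ) + b = 1 := by exact_mod_cast congrArg (Complex.ofReal) hab
  simp only [LmapFun, Pi.add_apply, Pi.smul_apply, Complex.real_smul,
    Finset.sum_add_distrib]
  rw [← Finset.mul_sum, ← Finset.mul_sum]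
  linear_combination A s.fst s.snd p q * hab'

lemma lmapfun_continuous (A : (j : Fin n) → Fin (m j) → Matrix (Fin d) (Fin d) ℂ) :
    Continuous (LmapFun A) := by
  have h : LmapFun A = fun G => (fun s a b =>
      (∑ g ∈ Finset.univ.filter (fun g : JT n m => g s.1 = s.2), G g a b))
      - (fun s a b => A s.1 s.2 a b) := by
    funext G s a b; simp [LmapFun]
  rw [h]
  refine Continuous.sub ?_ continuous_const
  let L : FS d n m →ₗ[ℝ] ES d n m :=
    { toFun := fun G => fun s a b =>
        ∑ g ∈ Finset.univ.filter (fun g : JT n m => g s.1 = s.2), G g a b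
      map_add' := by intro G1 G2; funext s a b; simp [Finset.sum_add_distrib]
      map_smul' := by intro c G; funext s a b; simp [Finset.smul_sum] }
  exact L.continuous_of_finiteDimensional

lemma sep (A : (j : Fin n) → Fin (m j) → Matrix (Fin d) (Fin d) ℂ)
    (h0 : ∀ G : JT n m → Matrix (Fin d) (Fin d) ℂ, IsPOVM G →
      ∃ s : TT n m, marg G s.1 s.2 ≠ A s.1 s.2) :
    ∃ (f : ES d n m →L[ℝ] ℝ) (u : ℝ), u < 0 ∧
      ∀ G : JT n m → Matrix (Fin d) (Fin d) ℂ, IsPOVM G →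
        f (fun s a b => (marg G s.1 s.2 - A s.1 s.2) a b) < u := by
  classical
  set K : Set (ES d n m) := LmapFun A '' GSet d n m with hK
  have hmem : ∀ G : JT n m → Matrix (Fin d) (Fin d) ℂ, IsPOVM G →
      (fun s a b => (marg G s.1 s.2 - A s.1 s.2) a b) ∈ K := by
    intro G hG
    refine ⟨fun g a b => G g a b, ?_, LmapFun_eq A G⟩
    exact hG
  have hcompact : IsCompact K :=
    ((Metric.isCompact_of_isClosed_isBounded gset_isClosed gset_isBounded).image
      (lmapfun_continuous A))
  have hconv : Convex ℝ K := by
    rintro x ⟨G1, hG1, rfl⟩ y ⟨G2, hG2, rfl⟩ a b ha hb hab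
    exact ⟨a • G1 + b • G2, gset_convex hG1 hG2 ha hb hab,
      (lmapfun_affine A G1 G2 hab).symm ▸ rfl⟩
  have h0K : (0 : ES d n m) ∉ K := by
    rintro ⟨G, hG, hΦ⟩
    obtain ⟨s, hs⟩ := h0 (fun g => Matrix.of (G g)) hG
    apply hs
    ext a b
    have := congrFun (congrFun (congrFun hΦ s) a) b
    simp only [LmapFun, Pi.zero_apply] at this
    rw [← sub_eq_zero, marg, Matrix.sum_apply]
    exact this
  obtain ⟨f, u, hfu, hu0⟩ :=
    geometric_hahn_banach_closed_point hconv hcompact.isClosed h0K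
  refine ⟨f, u, ?_, fun G hG => hfu _ (hmem G hG)⟩
  simpa using hu0

end Sep



lemma trace_filter_sum {d n : ℕ} {m : Fin n → ℕ} (ρ : Matrix (Fin d) (Fin d) ℂ)
    (G : JT n m → Matrix (Fin d) (Fin d) ℂ) (j : Fin n) (x : Fin (m j)) :
    ∑ g ∈ Finset.univ.filter (fun g : JT n m => g j = x), (ρ * G g).trace
      = (ρ * marg G j x).trace := by
  rw [marg, Finset.mul_sum, Matrix.trace_sum]

lemma marg_sum_eq_one {d n : ℕ} {m : Fin n → ℕ} {G : JT n m → Matrix (Fin d) (Fin d) ℂ}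
    (hG : IsPOVM G) (j : Fin n) : ∑ x, marg G j x = 1 := by
  rw [← hG.2]
  exact Finset.sum_fiberwise_of_maps_to (fun g _ => Finset.mem_univ (g j)) G

lemma dot_sum {d : ℕ} {ι : Type*} (s : Finset ι) (M : ι → Matrix (Fin d) (Fin d) ℂ)
    (v : Fin d → ℂ) :
    star v ⬝ᵥ (∑ g ∈ s, M g) *ᵥ v = ∑ g ∈ s, star v ⬝ᵥ M g *ᵥ v := by
  classical
  refine Finset.induction_on s (by simp) ?_
  intro g s' hg ih
  rw [Finset.sum_insert hg, Finset.sum_insert hg, Matrix.add_mulVec, dotProduct_add, ih]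

lemma marg_posSemidef {d n : ℕ} {m : Fin n → ℕ} {G : JT n m → Matrix (Fin d) (Fin d) ℂ}
    (hG : IsPOVM G) (j : Fin n) (x : Fin (m j)) : (marg G j x).PosSemidef := by
  refine Matrix.PosSemidef.of_dotProduct_mulVec_nonneg ?_ ?_
  · unfold Matrix.IsHermitian
    ext a b
    rw [Matrix.conjTranspose_apply, marg, Matrix.sum_apply, Matrix.sum_apply, star_sum]
    exact Finset.sum_congr rfl fun g _ => congrFun (congrFun ((hG.1 g).1) a) b |>.symm ▸
      (by rw [← Matrix.conjTranspose_apply, (hG.1 g).1.eq])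
  · intro v
    rw [marg, dot_sum]
    exact Finset.sum_nonneg fun g _ => (hG.1 g).dotProduct_mulVec_nonneg v

lemma trace_re_abs_le {d : ℕ} (M : Matrix (Fin d) (Fin d) ℂ) :
    |M.trace.re| ≤ ∑ a, ∑ b, ‖M a b‖ := by
  rw [Matrix.trace, Complex.re_sum]
  calc |∑ a, (M.diag a).re| ≤ ∑ a, |(M a a).re| := Finset.abs_sum_le_sum_abs _ _
    _ ≤ ∑ a, ‖M a a‖ := Finset.sum_le_sum fun a _ => Complex.abs_re_le_norm _
    _ ≤ ∑ a, ∑ b, ‖M a b‖ := Finset.sum_le_sum fun a _ =>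
        Finset.single_le_sum (fun b _ => norm_nonneg _) (Finset.mem_univ a)

theorem exists_S0 {d n : ℕ} {m : Fin n → ℕ}
    (A : (j : Fin n) → Fin (m j) → Matrix (Fin d) (Fin d) ℂ)
    (hA : ∀ j, IsPOVM (A j)) (hm : ∀ j, 1 ≤ m j) (hd : 0 < d) (hn : 0 < n)
    (hinc : ¬ SCompat A {ρ | IsState ρ}) :
    ∃ S₀ : Set (Matrix (Fin d) (Fin d) ℂ),
      (∀ ρ ∈ S₀, IsState ρ) ∧ ¬ SCompat A S₀ ∧
      Module.finrank ℝ (vectorSpan ℝ S₀) ≤ (∑ j, m j) - n := by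
  classical
  -- separation
  have h0 : ∀ G : JT n m → Matrix (Fin d) (Fin d) ℂ, IsPOVM G →
      ∃ s : TT n m, marg G s.1 s.2 ≠ A s.1 s.2 := by
    intro G hG
    by_contra h
    push_neg at h
    exact hinc ⟨G, hG, fun ρ _ j x => by rw [trace_filter_sum, h ⟨j, x⟩]⟩
  obtain ⟨f, u, hu, hf⟩ := sep A h0
  -- functionals and their representing Hermitian matrices
  let sing : TT n m → (Matrix (Fin d) (Fin d) ℂ →ₗ[ℝ] ES d n m) := fun s =>
    { toFun := fun M => Pi.single s (fun a b => M a b)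
      map_add' := fun M N => by
        rw [← Pi.single_add]; rfl
      map_smul' := fun r M => by
        rw [RingHom.id_apply, ← Pi.single_smul]; rfl }
  let ψ : TT n m → (Matrix (Fin d) (Fin d) ℂ →ₗ[ℝ] ℝ) := fun s =>
    (f : ES d n m →ₗ[ℝ] ℝ).comp (sing s)
  choose Hs hherm hrep using fun s : TT n m => exists_herm_repr (ψ s)
  have hdec : ∀ C : ES d n m, f C = ∑ s, ψ s (Matrix.of (C s)) := by
    intro C
    conv_lhs => rw [show C = ∑ s, Pi.single s (C s) from (Finset.univ_sum_single C).symm]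
    rw [map_sum]
    rfl
  -- shifted PSD matrices and states
  let x0 : (j : Fin n) → Fin (m j) := fun j => ⟨0, hm j⟩
  let B : TT n m → Matrix (Fin d) (Fin d) ℂ := fun s => Hs s - Hs ⟨s.1, x0 s.1⟩
  have hBherm : ∀ s, (B s).IsHermitian := fun s => (hherm s).sub (hherm _)
  let SB : TT n m → ℝ := fun s => ∑ a, ∑ b, ‖B s a b‖
  have hSB0 : ∀ s, 0 ≤ SB s := fun s =>
    Finset.sum_nonneg fun a _ => Finset.sum_nonneg fun b _ => norm_nonneg _
  let t : Fin n → ℝ := fun j => (∑ x, SB ⟨j, x⟩) + 1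
  have ht1 : ∀ j, 1 ≤ t j := fun j => le_add_of_nonneg_left
    (Finset.sum_nonneg fun x _ => hSB0 _)
  have hSBt : ∀ s : TT n m, SB s ≤ t s.1 - 1 := by
    rintro ⟨j, x⟩
    simp only [t, add_sub_cancel_right]
    exact Finset.single_le_sum (fun y _ => hSB0 ⟨j, y⟩) (Finset.mem_univ x)
  let P : TT n m → Matrix (Fin d) (Fin d) ℂ := fun s => B s + (t s.1 : ℂ) • 1
  have hPpsd : ∀ s, (P s).PosSemidef := fun s =>
    shift_psd (hBherm s) (by linarith [hSBt s])
  have hPtr : ∀ s : TT n m, (P s).trace = (B s).trace + (t s.1 * d : ℝ) := by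
    intro s
    rw [Matrix.trace_add, Matrix.trace_smul, Matrix.trace_one]
    simp only [Fintype.card_fin, smul_eq_mul]
    push_cast
    ring
  let c : TT n m → ℝ := fun s => (P s).trace.re
  have hcpos : ∀ s, 0 < c s := by
    intro s
    have h1 := trace_re_abs_le (B s)
    have h2 : c s = (B s).trace.re + t s.1 * d := by
      simp only [c, hPtr s, Complex.add_re, Complex.ofReal_re]
    have h3 : (1:ℝ) ≤ d := by exact_mod_cast hd
    have h4 := hSBt s
    rw [abs_le] at h1
    nlinarith [ht1 s.1, h1.1]
  have htrc : ∀ s, (P s).trace = ((c s : ℝ) : ℂ) := by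
    intro s
    have him : (P s).trace.im = 0 := herm_trace_im (hPpsd s).1
    exact Complex.ext (by simp [c]) (by simp [him])
  let ρfun : TT n m → Matrix (Fin d) (Fin d) ℂ := fun s => (c s)⁻¹ • P s
  have hstate : ∀ s, IsState (ρfun s) := by
    intro s
    refine ⟨psd_smul_real (hPpsd s) (inv_nonneg.2 (hcpos s).le), ?_⟩
    show ((c s)⁻¹ • P s).trace = 1
    rw [Matrix.trace_smul, htrc s]
    rw [Complex.real_smul, ← Complex.ofReal_mul, inv_mul_cancel₀ (hcpos s).ne']
    norm_num
  refine ⟨Set.range ρfun, by rintro ρ ⟨s, rfl⟩; exact hstate s, ?_, ?_⟩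
  · -- incompatibility on S₀
    rintro ⟨G, hG, hagree⟩
    let D : TT n m → Matrix (Fin d) (Fin d) ℂ := fun s => marg G s.1 s.2 - A s.1 s.2
    have hDherm : ∀ s, (D s).IsHermitian := fun s =>
      (marg_posSemidef hG s.1 s.2).1.sub ((hA s.1).1 s.2).1
    have hDsum : ∀ j, ∑ x, D ⟨j, x⟩ = 0 := by
      intro j
      show ∑ x, (marg G j x - A j x) = 0
      rw [Finset.sum_sub_distrib, marg_sum_eq_one hG j, (hA j).2, sub_self]
    have htrace0 : ∀ s : TT n m, (ρfun s * D s).trace = 0 := by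
      intro s
      have h := hagree (ρfun s) ⟨s, rfl⟩ s.1 s.2
      rw [trace_filter_sum] at h
      show (ρfun s * (marg G s.1 s.2 - A s.1 s.2)).trace = 0
      rw [mul_sub, Matrix.trace_sub, h, sub_self]
    have hPtrace0 : ∀ s : TT n m, ((P s) * (D s)).trace = 0 := by
      intro s
      have hcs : (c s) • ρfun s = P s := by
        show (c s) • ((c s)⁻¹ • P s) = P s
        rw [smul_smul, mul_inv_cancel₀ (hcpos s).ne', one_smul]
      rw [← hcs, Matrix.smul_mul, Matrix.trace_smul, htrace0 s, smul_zero]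
    have hC := hf G hG
    have hCeq : f (fun s a b => (marg G s.1 s.2 - A s.1 s.2) a b) = 0 := by
      rw [hdec]
      have hterm : ∀ s : TT n m, ψ s (Matrix.of (fun a b => (marg G s.1 s.2 - A s.1 s.2) a b))
          = ((Hs s) * (D s)).trace.re := by
        intro s
        exact hrep s (D s) (hDherm s)
      rw [Finset.sum_congr rfl fun s _ => hterm s]
      have hsplit : ∀ s : TT n m, ((Hs s) * (D s)).trace.re
          = ((P s) * (D s)).trace.re
            + (((Hs ⟨s.1, x0 s.1⟩ - (t s.1 : ℂ) • 1) * (D s)).trace).re := by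
        intro s
        have hHs : Hs s = P s + (Hs ⟨s.1, x0 s.1⟩ - (t s.1 : ℂ) • 1) := by
          show Hs s = (Hs s - Hs ⟨s.1, x0 s.1⟩ + (t s.1 : ℂ) • 1)
            + (Hs ⟨s.1, x0 s.1⟩ - (t s.1 : ℂ) • 1)
          abel
        rw [← Complex.add_re, ← Matrix.trace_add, ← Matrix.add_mul, ← hHs]
      rw [Finset.sum_congr rfl fun s _ => hsplit s, Finset.sum_add_distrib]
      have hfirst : ∑ s : TT n m, ((P s) * (D s)).trace.re = 0 := by
        refine Finset.sum_eq_zero fun s _ => ?_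
        rw [hPtrace0 s, Complex.zero_re]
      have hsecond : ∑ s : TT n m,
          (((Hs ⟨s.1, x0 s.1⟩ - (t s.1 : ℂ) • 1) * (D s)).trace).re = 0 := by
        rw [← Finset.univ_sigma_univ, Finset.sum_sigma]
        refine Finset.sum_eq_zero fun j _ => ?_
        have : ∑ x : Fin (m j),
            (((Hs ⟨j, x0 j⟩ - (t j : ℂ) • 1) * (D ⟨j, x⟩)).trace).re
            = (((Hs ⟨j, x0 j⟩ - (t j : ℂ) • 1) * (∑ x, D ⟨j, x⟩)).trace).re := by
          rw [Finset.mul_sum, Matrix.trace_sum, Complex.re_sum]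
        rw [this, hDsum j, Matrix.mul_zero, Matrix.trace_zero, Complex.zero_re]
      rw [hfirst, hsecond, add_zero]
    rw [hCeq] at hC
    linarith
  · -- dimension bound
    let j0 : Fin n := ⟨0, hn⟩
    have key : ∀ j, ρfun ⟨j, x0 j⟩ = ((d : ℝ))⁻¹ • (1 : Matrix (Fin d) (Fin d) ℂ) := by
      intro j
      have hB0 : B ⟨j, x0 j⟩ = 0 := sub_self _
      have hP0 : P ⟨j, x0 j⟩ = (t j : ℂ) • 1 := by
        show B ⟨j, x0 j⟩ + _ = _
        rw [hB0, zero_add]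
      have hc0 : c ⟨j, x0 j⟩ = t j * d := by
        show (P ⟨j, x0 j⟩).trace.re = _
        rw [hP0, Matrix.trace_smul, Matrix.trace_one]
        simp [Fintype.card_fin]
      have htj : (0:ℝ) < t j := lt_of_lt_of_le one_pos (ht1 j)
      have hdne : (d:ℝ) ≠ 0 := Nat.cast_ne_zero.2 hd.ne'
      show (c ⟨j, x0 j⟩)⁻¹ • P ⟨j, x0 j⟩ = _
      rw [hc0, hP0]
      ext a b
      simp only [Matrix.smul_apply, Matrix.one_apply, Complex.real_smul, smul_eq_mul]
      split_ifs with hab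
      · push_cast
        field_simp
      · simp
    set mixed := ((d : ℝ))⁻¹ • (1 : Matrix (Fin d) (Fin d) ℂ) with hmixed
    have hbase : ∀ j : Fin n, ρfun ⟨j, x0 j⟩ = mixed := key
    let w : TT n m → Matrix (Fin d) (Fin d) ℂ := fun s => ρfun s - mixed
    let ι := (j : Fin n) × {x : Fin (m j) // x ≠ x0 j}
    let v : ι → Matrix (Fin d) (Fin d) ℂ := fun p => w ⟨p.1, p.2.1⟩
    have hmem : mixed ∈ Set.range ρfun := ⟨⟨j0, x0 j0⟩, hbase j0⟩
    haveI : FiniteDimensional ℝ (Matrix (Fin d) (Fin d) ℂ) := by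
      infer_instance
    have hvs : vectorSpan ℝ (Set.range ρfun) = Submodule.span ℝ (Set.range w) := by
      rw [vectorSpan_eq_span_vsub_set_right ℝ hmem]
      congr 1
      rw [← Set.range_comp]
      rfl
    have hsub : Set.range w ⊆ insert 0 (Set.range v) := by
      rintro _ ⟨⟨j, x⟩, rfl⟩
      by_cases hx : x = x0 j
      · subst hx
        have : w ⟨j, x0 j⟩ = 0 := by
          show ρfun ⟨j, x0 j⟩ - mixed = 0
          rw [hbase j, sub_self]
        rw [this]
        exact Set.mem_insert _ _
      · exact Set.mem_insert_of_mem _ ⟨⟨j, ⟨x, hx⟩⟩, rfl⟩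
    have h1 : Submodule.span ℝ (Set.range w) ≤ Submodule.span ℝ (Set.range v) := by
      refine le_trans (Submodule.span_mono hsub) ?_
      rw [Submodule.span_insert_zero]
    rw [hvs]
    haveI := Classical.decEq (Matrix (Fin d) (Fin d) ℂ)
    haveI : Fintype ↥(Set.range v) := Set.fintypeRange v
    have h2 : Module.finrank ℝ (Submodule.span ℝ (Set.range v)) ≤ Fintype.card ι := by
      refine le_trans (finrank_span_le_card (Set.range v)) ?_
      rw [Set.toFinset_range]
      exact le_trans (Finset.card_image_le) (by simp)
    have hcard : Fintype.card ι = ∑ j, (m j - 1) := by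
      rw [Fintype.card_sigma]
      refine Finset.sum_congr rfl fun j _ => ?_
      rw [Fintype.card_subtype_compl, Fintype.card_subtype_eq, Fintype.card_fin]
    have hsum : ∑ j, (m j - 1) = (∑ j, m j) - n := by
      have h3 : ∑ j, ((m j - 1) + 1) = ∑ j, m j :=
        Finset.sum_congr rfl fun j _ => Nat.succ_pred_eq_of_pos (hm j)
      rw [Finset.sum_add_distrib] at h3
      simp only [Finset.sum_const, Finset.card_univ, Fintype.card_fin, smul_eq_mul,
        mul_one] at h3
      omega
    calc Module.finrank ℝ (Submodule.span ℝ (Set.range w))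
        ≤ Module.finrank ℝ (Submodule.span ℝ (Set.range v)) := Submodule.finrank_mono h1
      _ ≤ Fintype.card ι := h2
      _ = (∑ j, m j) - n := by rw [hcard, hsum]

/-- For incompatible observables `A₁,…,A_n` with `m₁,…,m_n` outcomes there is a set of
states `S₀` of affine dimension at most `Σ_j m_j − n` on which they are
`S₀`-incompatible; hence `χ_incomp(A₁,…,A_n) ≤ Σ_j m_j − n + 1`. -/
theorem chiIncomp_upper_bound {d n : ℕ} {m : Fin n → ℕ}
    (A : (j : Fin n) → Fin (m j) → Matrix (Fin d) (Fin d) ℂ)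
    (hA : ∀ j, IsPOVM (A j)) (hm : ∀ j, 1 ≤ m j)
    (hinc : ¬ SCompat A {ρ | IsState ρ}) :
    (∃ S₀ : Set (Matrix (Fin d) (Fin d) ℂ),
      (∀ ρ ∈ S₀, IsState ρ) ∧ ¬ SCompat A S₀ ∧
      Module.finrank ℝ (vectorSpan ℝ S₀) ≤ (∑ j, m j) - n) ∧
    chiIncomp A ≤ (∑ j, m j) - n + 1 := by
  classical
  have hd : 0 < d := by
    by_contra h
    push_neg at h
    have hd0 : d = 0 := Nat.le_zero.mp (Nat.lt_succ_iff.mp (Nat.lt_succ_of_le h))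
    subst hd0
    apply hinc
    refine ⟨fun _ => 0, ⟨fun g => Matrix.PosSemidef.zero, Subsingleton.elim _ _⟩, ?_⟩
    intro ρ _ j x
    have hz : ∀ X Y : Matrix (Fin 0) (Fin 0) ℂ, (X * Y).trace = 0 := by
      intro X Y
      simp [Matrix.trace]
    simp [hz]
  have hn : 0 < n := by
    by_contra h
    push_neg at h
    have hn0 : n = 0 := Nat.le_zero.mp h
    subst hn0
    apply hinc
    refine ⟨fun _ => 1, ⟨fun g => Matrix.PosSemidef.one, ?_⟩, fun ρ _ j x => Fin.elim0 j⟩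
    rw [Fintype.sum_unique]
  obtain ⟨S₀, hS1, hS2, hS3⟩ := exists_S0 A hA hm hd hn hinc
  refine ⟨⟨S₀, hS1, hS2, hS3⟩, ?_⟩
  have hmem : (Module.finrank ℝ (vectorSpan ℝ S₀) + 1) ∈
      {k : ℕ | ∃ S₀ : Set (Matrix (Fin d) (Fin d) ℂ),
        (∀ ρ ∈ S₀, IsState ρ) ∧ ¬ SCompat A S₀ ∧
        k = Module.finrank ℝ (vectorSpan ℝ S₀) + 1} := ⟨S₀, hS1, hS2, rfl⟩
  exact le_trans (Nat.sInf_le hmem) (by omega)
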